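/- arXiv:2112.14422 — 7 statements merged into one kernel-verified Lean document; each statement's English description precedes it below -/
import Mathlib

section
/- For every integer b ≥ 2 and integer n ≥ 1, the quantity ν̄(n,b) := (2/(b-1)) S_b(n) - ((n-1)/(b-1)) d_b(n) equals Σ_{i≥1} Σ_{j=1}^{n-1} (⌊n/b^i⌋ - ⌊j/b^i⌋ - ⌊(n-j)/b^i⌋), and in particular ν̄(n,b) is a nonnegative integer. -/
/-- Sum of base-`b` digits of `n`. -/
def digSum (b n : ℕ) : ℕ := (Nat.digits b n).sum

/-- Running digit sum `S_b(n) = Σ_{j=1}^{n-1} d_b(j)`. -/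
def runSum (b n : ℕ) : ℕ := ∑ j ∈ Finset.range n, digSum b j

/-- The statistic `ν̄(n,b) = (2 S_b(n) - (n-1) d_b(n)) / (b-1)`. -/
def nubar (n b : ℕ) : ℚ :=
  (2 * (runSum b n : ℚ) - ((n : ℚ) - 1) * (digSum b n : ℚ)) / ((b : ℚ) - 1)

lemma digSum_formula (b : ℕ) (hb : 2 ≤ b) :
    ∀ N m, m < b ^ N →
      (digSum b m : ℚ) = m - ((b : ℚ) - 1) * ∑ i ∈ Finset.range N, ((m / b ^ (i + 1) : ℕ) : ℚ) := by
  intro N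
  induction N with
  | zero =>
    intro m hm
    simp only [pow_zero, Nat.lt_one_iff] at hm
    subst hm
    simp [digSum]
  | succ N ih =>
    intro m hm
    by_cases h0 : m = 0
    · simp [h0, digSum, Nat.zero_div]
    · have hb1 : 1 < b := hb
      have hdig : (digSum b m : ℚ) = (m % b : ℕ) + (digSum b (m / b) : ℕ) := by
        unfold digSum
        rw [Nat.digits_def' hb1 (Nat.pos_of_ne_zero h0)]
        push_cast [List.sum_cons]
        ring
      have hmb : m / b < b ^ N := by
        rw [Nat.div_lt_iff_lt_mul (by omega : 0 < b)]
        calc m < b ^ (N + 1) := hm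
          _ = b ^ N * b := by ring
      have ihb := ih (m / b) hmb
      have hshift : ∑ i ∈ Finset.range (N + 1), ((m / b ^ (i + 1) : ℕ) : ℚ)
          = ((m / b : ℕ) : ℚ) + ∑ i ∈ Finset.range N, ((m / b / b ^ (i + 1) : ℕ) : ℚ) := by
        rw [Finset.sum_range_succ', add_comm]
        congr 1
        · norm_num
        · apply Finset.sum_congr rfl
          intro i _
          congr 1
          rw [Nat.div_div_eq_div_mul, ← pow_succ']
      have hmod : ((m % b : ℕ) : ℚ) = (m : ℚ) - (b : ℚ) * ((m / b : ℕ) : ℚ) := by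
        have := Nat.mod_add_div m b
        have : ((m % b + b * (m / b) : ℕ) : ℚ) = (m : ℚ) := by rw [this]
        push_cast at this
        linarith
      rw [hdig, ihb, hshift, hmod]
      ring

lemma gaussQ (n : ℕ) : ∑ j ∈ Finset.range n, (j : ℚ) = (n : ℚ) * ((n : ℚ) - 1) / 2 := by
  induction n with
  | zero => simp
  | succ m ih =>
    rw [Finset.sum_range_succ, ih]
    push_cast
    ring

/-- `ν̄(n,b)` equals the double sum `Σ_{i≥1} Σ_{j=1}^{n-1} (⌊n/b^i⌋ - ⌊j/b^i⌋ - ⌊(n-j)/b^i⌋)`,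
and in particular is a nonnegative integer. -/
theorem nubar_eq_double_sum (b n : ℕ) (hb : 2 ≤ b) (hn : 1 ≤ n) :
    nubar n b =
        ∑' i : ℕ, ∑ j ∈ Finset.Ico 1 n,
          (((n / b ^ (i + 1) : ℕ) : ℚ) - ((j / b ^ (i + 1) : ℕ) : ℚ)
            - (((n - j) / b ^ (i + 1) : ℕ) : ℚ)) ∧
      ∃ k : ℕ, nubar n b = (k : ℚ) := by
  have hbQ : (b : ℚ) - 1 ≠ 0 := by
    have : (2 : ℚ) ≤ (b : ℚ) := by exact_mod_cast hb
    linarith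
  set N := n with hNdef
  have hlt : ∀ m, m ≤ n → m < b ^ N := fun m hm =>
    lt_of_le_of_lt hm (Nat.lt_pow_self (by omega))
  set F : ℕ → ℚ := fun m => ∑ i ∈ Finset.range N, ((m / b ^ (i + 1) : ℕ) : ℚ) with hF
  have hdig : ∀ m, m ≤ n → (digSum b m : ℚ) = m - ((b : ℚ) - 1) * F m := fun m hm =>
    digSum_formula b hb N m (hlt m hm)
  have hF0 : F 0 = 0 := by simp [hF, Nat.zero_div]
  have hgauss := gaussQ n
  have hrun : (runSum b n : ℚ)
      = (n : ℚ) * ((n : ℚ) - 1) / 2 - ((b : ℚ) - 1) * ∑ j ∈ Finset.range n, F j := by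
    have : (runSum b n : ℚ) = ∑ j ∈ Finset.range n, ((j : ℚ) - ((b : ℚ) - 1) * F j) := by
      unfold runSum
      push_cast
      exact Finset.sum_congr rfl fun j hj => hdig j (le_of_lt (Finset.mem_range.mp hj))
    rw [this, Finset.sum_sub_distrib, ← Finset.mul_sum, hgauss]
  -- nubar in terms of F
  have hnubar : nubar n b = ((n : ℚ) - 1) * F n - 2 * ∑ j ∈ Finset.range n, F j := by
    unfold nubar
    rw [hrun, hdig n le_rfl]
    field_simp
    ring
  -- sum over range n equals sum over Ico 1 n
  have hIco : ∑ j ∈ Finset.range n, F j = ∑ j ∈ Finset.Ico 1 n, F j := by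
    rw [Finset.range_eq_Ico, Finset.sum_eq_sum_Ico_succ_bot (by omega : 0 < n), hF0, zero_add]
  -- reflection
  have hrefl : ∑ j ∈ Finset.Ico 1 n, F (n - j) = ∑ j ∈ Finset.Ico 1 n, F j := by
    have := Finset.sum_Ico_reflect F 1 (le_of_lt (Nat.lt_succ_self n) : n ≤ n + 1)
    simpa using this
  have hcard : (Finset.Ico 1 n).card = n - 1 := by simp
  have hmain : nubar n b = ∑ j ∈ Finset.Ico 1 n, (F n - F j - F (n - j)) := by
    rw [hnubar, hIco]
    rw [Finset.sum_sub_distrib, Finset.sum_sub_distrib, hrefl, Finset.sum_const, hcard]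
    have : ((n - 1 : ℕ) : ℚ) = (n : ℚ) - 1 := by
      push_cast [Nat.cast_sub (show 1 ≤ n from hn)]; ring
    rw [nsmul_eq_mul, this]
    ring
  -- the tsum collapses to a finite sum
  set g : ℕ → ℚ := fun i => ∑ j ∈ Finset.Ico 1 n,
      (((n / b ^ (i + 1) : ℕ) : ℚ) - ((j / b ^ (i + 1) : ℕ) : ℚ)
        - (((n - j) / b ^ (i + 1) : ℕ) : ℚ)) with hg
  have hzero : ∀ i ∉ Finset.range N, g i = 0 := by
    intro i hi
    have hiN : N ≤ i := by simpa using hi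
    have hpow : ∀ m, m ≤ n → m / b ^ (i + 1) = 0 := by
      intro m hm
      apply Nat.div_eq_of_lt
      calc m < b ^ N := hlt m hm
        _ ≤ b ^ (i + 1) := Nat.pow_le_pow_right (by omega) (by omega)
    rw [hg]
    apply Finset.sum_eq_zero
    intro j hj
    have hj1 : 1 ≤ j ∧ j < n := by simpa using Finset.mem_Ico.mp hj
    rw [hpow n le_rfl, hpow j (le_of_lt hj1.2), hpow (n - j) (Nat.sub_le n j)]
    simp
  have htsum : ∑' i : ℕ, g i = ∑ i ∈ Finset.range N, g i := tsum_eq_sum hzero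
  have hswap : ∑ i ∈ Finset.range N, g i = ∑ j ∈ Finset.Ico 1 n, (F n - F j - F (n - j)) := by
    rw [hg]
    rw [Finset.sum_comm]
    apply Finset.sum_congr rfl
    intro j _
    rw [hF]
    rw [Finset.sum_sub_distrib, Finset.sum_sub_distrib]
  constructor
  · rw [hmain, htsum, hswap]
  · -- nonnegative integer
    refine ⟨∑ i ∈ Finset.range N, ∑ j ∈ Finset.Ico 1 n,
      (n / b ^ (i + 1) - j / b ^ (i + 1) - (n - j) / b ^ (i + 1)), ?_⟩
    rw [hmain, ← hswap, hg, Nat.cast_sum]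
    apply Finset.sum_congr rfl
    intro i _
    rw [Nat.cast_sum]
    apply Finset.sum_congr rfl
    intro j hj
    have hj1 : 1 ≤ j ∧ j < n := by simpa using Finset.mem_Ico.mp hj
    have hle : j / b ^ (i + 1) + (n - j) / b ^ (i + 1) ≤ n / b ^ (i + 1) := by
      calc j / b ^ (i + 1) + (n - j) / b ^ (i + 1) ≤ (j + (n - j)) / b ^ (i + 1) :=
            Nat.add_div_le_add_div _ _ _
        _ = n / b ^ (i + 1) := by rw [Nat.add_sub_cancel' (le_of_lt hj1.2)]
    have h2 : j / b ^ (i + 1) ≤ n / b ^ (i + 1) := le_trans (Nat.le_add_right _ _) hle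
    have h3 : (n - j) / b ^ (i + 1) ≤ n / b ^ (i + 1) - j / b ^ (i + 1) :=
      Nat.le_sub_of_add_le (by rwa [add_comm] at hle)
    rw [Nat.cast_sub h3, Nat.cast_sub h2]
end

section
/- Let b ≥ 2 and n ≥ 1 be integers. Then ν̄(n,b) = 0 if and only if n = a·b^k + b^k - 1 for some a ∈ {1, 2, ..., b-1} and some integer k ≥ 0. -/
/-- Integral numerator of `nubar`. -/
def Tb (b n : ℕ) : ℤ := 2 * (runSum b n : ℤ) - ((n : ℤ) - 1) * (digSum b n : ℤ)

lemma digSum_zero (b : ℕ) : digSum b 0 = 0 := by simp [digSum]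

lemma digSum_mul_add {b : ℕ} (hb : 2 ≤ b) (q s : ℕ) (hs : s < b) :
    digSum b (b * q + s) = s + digSum b q := by
  rcases Nat.eq_zero_or_pos (b * q + s) with h | h
  · have hs0 : s = 0 := by omega
    have hq : q = 0 := by
      rcases Nat.mul_eq_zero.mp (by omega : b * q = 0) with h' | h' <;> omega
    simp [hs0, hq, digSum]
  · unfold digSum
    rw [Nat.digits_def' (by omega : 1 < b) h]
    have h1 : (b * q + s) % b = s := by
      rw [Nat.mul_add_mod]; exact Nat.mod_eq_of_lt hs
    have h2 : (b * q + s) / b = q := by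
      rw [Nat.mul_add_div (by omega : 0 < b)]
      simp [Nat.div_eq_of_lt hs]
    rw [List.sum_cons, h1, h2]

lemma digSum_le {b : ℕ} (hb : 2 ≤ b) (n : ℕ) : digSum b n ≤ n := by
  induction n using Nat.strong_induction_on with
  | _ n ih =>
    rcases Nat.eq_zero_or_pos n with h | h
    · simp [h, digSum]
    · have hd := Nat.div_add_mod n b
      have h1 : digSum b n = n % b + digSum b (n / b) := by
        conv_lhs => rw [← hd]
        exact digSum_mul_add hb _ _ (Nat.mod_lt _ (by omega))
      have h2 := ih (n / b) (Nat.div_lt_self h (by omega))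
      have h3 : n / b ≤ b * (n / b) := Nat.le_mul_of_pos_left _ (by omega)
      omega

lemma runSum_add (b x y : ℕ) :
    runSum b (x + y) = runSum b x + ∑ i ∈ Finset.range y, digSum b (x + i) := by
  unfold runSum
  exact Finset.sum_range_add (digSum b) x y

lemma two_sum_range_id (r : ℕ) : 2 * ((∑ i ∈ Finset.range r, i : ℕ) : ℤ) = r * (r - 1) := by
  cases r with
  | zero => simp
  | succ r =>
    have h := Finset.sum_range_id_mul_two (r + 1)
    have h2 : (∑ i ∈ Finset.range (r + 1), i) * 2 = (r + 1) * r := by simpa using h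
    have h3 := congrArg (fun x : ℕ => (x : ℤ)) h2
    push_cast at h3 ⊢
    linarith

lemma two_runSum_mul {b : ℕ} (hb : 2 ≤ b) (m : ℕ) :
    2 * (runSum b (b * m) : ℤ) =
      (b : ℤ) * ((b : ℤ) - 1) * m + 2 * (b : ℤ) * (runSum b m : ℤ) := by
  induction m with
  | zero => simp [runSum]
  | succ m ih =>
    have h1 : b * (m + 1) = b * m + b := by ring
    rw [h1, runSum_add]
    have h2 : ∀ i ∈ Finset.range b, digSum b (b * m + i) = i + digSum b m := by
      intro i hi
      exact digSum_mul_add hb m i (Finset.mem_range.mp hi)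
    rw [Finset.sum_congr rfl h2, Finset.sum_add_distrib, Finset.sum_const,
      Finset.card_range, smul_eq_mul]
    have h3 := two_sum_range_id b
    have h4 : runSum b (m + 1) = runSum b m + digSum b m := by
      unfold runSum; rw [Finset.sum_range_succ]
    rw [h4]
    push_cast at h3 ⊢
    linarith

lemma two_runSum {b : ℕ} (hb : 2 ≤ b) (m r : ℕ) (hr : r < b) :
    2 * (runSum b (b * m + r) : ℤ) =
      (b : ℤ) * ((b : ℤ) - 1) * m + 2 * (b : ℤ) * (runSum b m : ℤ)
        + (r : ℤ) * ((r : ℤ) - 1) + 2 * (r : ℤ) * (digSum b m : ℤ) := by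
  rw [runSum_add]
  have h2 : ∀ i ∈ Finset.range r, digSum b (b * m + i) = i + digSum b m := by
    intro i hi
    exact digSum_mul_add hb m i (lt_trans (Finset.mem_range.mp hi) hr)
  rw [Finset.sum_congr rfl h2, Finset.sum_add_distrib, Finset.sum_const,
    Finset.card_range, smul_eq_mul]
  have h3 := two_sum_range_id r
  have h4 := two_runSum_mul hb m
  push_cast at h3 h4 ⊢
  linarith

lemma Tb_rec {b : ℕ} (hb : 2 ≤ b) (m r : ℕ) (hr : r < b) :
    Tb b (b * m + r) = (b : ℤ) * Tb b m
      + ((b : ℤ) - 1 - r) * ((b : ℤ) * m - (digSum b m : ℤ)) := by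
  have hd : (digSum b (b * m + r) : ℤ) = (r : ℤ) + (digSum b m : ℤ) := by
    rw [digSum_mul_add hb m r hr]; push_cast; ring
  have hs := two_runSum hb m r hr
  unfold Tb
  rw [hd]
  push_cast
  linear_combination hs

lemma Tb_zero (b : ℕ) : Tb b 0 = 0 := by simp [Tb, runSum, digSum]

lemma Tb_nonneg {b : ℕ} (hb : 2 ≤ b) (n : ℕ) : 0 ≤ Tb b n := by
  induction n using Nat.strong_induction_on with
  | _ n ih =>
    rcases Nat.eq_zero_or_pos n with h | h
    · rw [h, Tb_zero]
    · have hd := Nat.div_add_mod n b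
      have hr : n % b < b := Nat.mod_lt _ (by omega)
      have hrec := Tb_rec hb (n / b) (n % b) hr
      rw [hd] at hrec
      have h1 : 0 ≤ Tb b (n / b) := ih (n / b) (Nat.div_lt_self h (by omega))
      have h2 : (digSum b (n / b) : ℤ) ≤ (n / b : ℕ) := by
        exact_mod_cast digSum_le hb (n / b)
      have h3 : ((n / b : ℕ) : ℤ) ≤ (b : ℤ) * (n / b : ℕ) := by
        have : (1 : ℤ) ≤ b := by exact_mod_cast (by omega : 1 ≤ b)
        nlinarith [Int.ofNat_nonneg (n / b)]
      have h4 : ((n % b : ℕ) : ℤ) ≤ (b : ℤ) - 1 := by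
        have : ((n % b : ℕ) : ℤ) < (b : ℤ) := by exact_mod_cast hr
        linarith
      have h5 : (0 : ℤ) ≤ (b : ℤ) := by positivity
      nlinarith

lemma Tb_eq_zero_iff {b : ℕ} (hb : 2 ≤ b) :
    ∀ n : ℕ, 1 ≤ n →
      (Tb b n = 0 ↔ ∃ a : ℕ, 1 ≤ a ∧ a ≤ b - 1 ∧ ∃ k : ℕ, n = a * b ^ k + b ^ k - 1) := by
  intro n
  induction n using Nat.strong_induction_on with
  | _ n ih =>
    intro hn
    by_cases hsmall : n < b
    · -- n < b : both sides hold
      constructor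
      · intro _
        exact ⟨n, hn, by omega, 0, by simp⟩
      · intro _
        have hrec := Tb_rec hb 0 n hsmall
        simp only [Nat.mul_zero, Nat.zero_add] at hrec
        rw [hrec, Tb_zero, digSum_zero]
        push_cast
        ring
    · push_neg at hsmall
      set m := n / b with hm
      set r := n % b with hrr
      have hd : b * m + r = n := Nat.div_add_mod n b
      have hr : r < b := Nat.mod_lt _ (by omega)
      have hm1 : 1 ≤ m := Nat.one_le_div_iff (by omega) |>.mpr hsmall
      have hmn : m < n := Nat.div_lt_self (by omega) (by omega)
      have hrec := Tb_rec hb m r hr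
      rw [hd] at hrec
      -- positivity of the second factor
      have hdm : (digSum b m : ℤ) ≤ (m : ℤ) := by exact_mod_cast digSum_le hb m
      have hpos : 0 < (b : ℤ) * m - (digSum b m : ℤ) := by
        have hb2 : (2 : ℤ) ≤ b := by exact_mod_cast hb
        have hm1' : (1 : ℤ) ≤ m := by exact_mod_cast hm1
        nlinarith
      have hTm := Tb_nonneg hb m
      have hb0 : (0 : ℤ) < b := by exact_mod_cast (by omega : 0 < b)
      have hrle : (r : ℤ) ≤ (b : ℤ) - 1 := by
        have : (r : ℤ) < b := by exact_mod_cast hr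
        linarith
      constructor
      · intro h0
        -- deduce Tb b m = 0 and r = b - 1
        have hterm1 : 0 ≤ (b : ℤ) * Tb b m := by positivity
        have hterm2 : 0 ≤ ((b : ℤ) - 1 - r) * ((b : ℤ) * m - (digSum b m : ℤ)) :=
          mul_nonneg (by linarith) (le_of_lt hpos)
        rw [hrec] at h0
        have hA : (b : ℤ) * Tb b m = 0 := by linarith
        have hB : ((b : ℤ) - 1 - r) * ((b : ℤ) * m - (digSum b m : ℤ)) = 0 := by linarith
        have hTm0 : Tb b m = 0 := by
          rcases mul_eq_zero.mp hA with h' | h'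
          · exact absurd h' (by linarith)
          · exact h'
        have hr' : (r : ℤ) = (b : ℤ) - 1 := by
          rcases mul_eq_zero.mp hB with h' | h'
          · linarith
          · exact absurd h' (ne_of_gt hpos)
        have hrb : r = b - 1 := by omega
        obtain ⟨a, ha1, ha2, k, hk⟩ := (ih m hmn hm1).mp hTm0
        refine ⟨a, ha1, ha2, k + 1, ?_⟩
        have hbk : 1 ≤ b ^ k := Nat.one_le_pow _ _ (by omega)
        have hX : 1 ≤ a * b ^ k := Nat.one_le_iff_ne_zero.mpr (by positivity)
        have hm' : m + 1 = a * b ^ k + b ^ k := by omega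
        have hn' : n + 1 = a * b ^ (k + 1) + b ^ (k + 1) := by
          have hbm : n + 1 = b * m + b := by omega
          rw [hbm, show b * m + b = b * (m + 1) from by ring, hm']; ring
        exact Nat.eq_sub_of_add_eq hn'
      · rintro ⟨a, ha1, ha2, k, hk⟩
        have hbk : 1 ≤ b ^ k := Nat.one_le_pow _ _ (by omega)
        -- k must be positive
        rcases Nat.eq_zero_or_pos k with hk0 | hk0
        · exfalso
          rw [hk0] at hk
          simp at hk
          omega
        · obtain ⟨k', rfl⟩ : ∃ k', k = k' + 1 := ⟨k - 1, by omega⟩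
          have hbk' : 1 ≤ b ^ k' := Nat.one_le_pow _ _ (by omega)
          set m' := a * b ^ k' + b ^ k' - 1 with hm'
          have hm'1 : 1 ≤ m' := by
            have : 1 ≤ a * b ^ k' := Nat.one_le_iff_ne_zero.mpr (by positivity)
            omega
          have hdecomp : n = b * m' + (b - 1) := by
            have h1 : m' + 1 = a * b ^ k' + b ^ k' := by omega
            have h2 : n + 1 = a * b ^ (k' + 1) + b ^ (k' + 1) := by
              have : 1 ≤ a * b ^ (k' + 1) := Nat.one_le_iff_ne_zero.mpr (by positivity)
              omega
            have h3 : n + 1 = b * (m' + 1) := by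
              rw [h2, h1]
              ring
            have h4 : n + 1 = b * m' + b := by rw [h3]; ring
            omega
          have hm'n : m' < n := by
            have : b * m' ≥ 2 * m' := by
              have := Nat.mul_le_mul_right m' hb
              linarith
            omega
          have hTm'0 : Tb b m' = 0 :=
            (ih m' hm'n hm'1).mpr ⟨a, ha1, ha2, k', rfl⟩
          have hrec' := Tb_rec hb m' (b - 1) (by omega)
          rw [← hdecomp] at hrec'
          rw [hrec', hTm'0]
          have : ((b - 1 : ℕ) : ℤ) = (b : ℤ) - 1 := by
            have : (1 : ℕ) ≤ b := by omega
            push_cast [this]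
            ring
          rw [this]
          ring

/-- `ν̄(n,b) = 0` iff `n = a·b^k + b^k - 1` with `1 ≤ a ≤ b-1`, `k ≥ 0`. -/
theorem nubar_eq_zero_iff (b n : ℕ) (hb : 2 ≤ b) (hn : 1 ≤ n) :
    nubar n b = 0 ↔
      ∃ a : ℕ, 1 ≤ a ∧ a ≤ b - 1 ∧ ∃ k : ℕ, n = a * b ^ k + b ^ k - 1 := by
  have hden : ((b : ℚ) - 1) ≠ 0 := by
    have : (2 : ℚ) ≤ b := by exact_mod_cast hb
    intro h'; linarith
  have hnum : nubar n b = (Tb b n : ℚ) / ((b : ℚ) - 1) := by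
    unfold nubar Tb
    push_cast
    ring
  rw [hnum]
  rw [div_eq_zero_iff]
  have hiff : (Tb b n : ℚ) = 0 ∨ ((b : ℚ) - 1) = 0 ↔ Tb b n = 0 := by
    constructor
    · rintro (h' | h')
      · exact_mod_cast h'
      · exact absurd h' hden
    · intro h'; left; exact_mod_cast h'
  rw [hiff]
  exact Tb_eq_zero_iff hb n hn
end

section
/- (Drazin–Griffith inequality) For all integers b ≥ 2 and n ≥ 1, the running digit sum satisfies 0 ≤ S_b(n) ≤ (b-1)·n·log(n)/(2·log(b)). -/
lemma digSum_rec {b : ℕ} (hb : 2 ≤ b) (n : ℕ) :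
    digSum b n = n % b + digSum b (n / b) := by
  rcases Nat.eq_zero_or_pos n with h | h
  · simp [h, digSum]
  · unfold digSum
    rw [Nat.digits_def' (by omega : 1 < b) h]
    simp

lemma digSum_small {b : ℕ} (hb : 2 ≤ b) {a : ℕ} (ha : a < b) : digSum b a = a := by
  rw [digSum_rec hb a, Nat.mod_eq_of_lt ha, Nat.div_eq_of_lt ha, digSum_zero]
  omega

lemma digSum_add {b : ℕ} (hb : 2 ≤ b) :
    ∀ (k a j : ℕ), a < b → j < b ^ k → digSum b (a * b ^ k + j) = a + digSum b j
  | 0, a, j, ha, hj => by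
      have hj0 : j = 0 := by simpa using hj
      subst hj0
      simp [digSum_small hb ha, digSum_zero]
  | (k+1), a, j, ha, hj => by
      have hb0 : 0 < b := by omega
      have h1 : (a * b ^ (k+1) + j) % b = j % b := by
        rw [pow_succ, ← mul_assoc, mul_comm (a * b ^ k) b]
        exact Nat.mul_add_mod b (a * b ^ k) j
      have h2 : (a * b ^ (k+1) + j) / b = a * b ^ k + j / b := by
        rw [pow_succ, ← mul_assoc, add_comm, Nat.add_mul_div_right _ _ hb0, add_comm]
      have h3 : j / b < b ^ k := by
        apply Nat.div_lt_of_lt_mul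
        rw [← pow_succ']
        exact hj
      rw [digSum_rec hb (a * b ^ (k+1) + j), h1, h2, digSum_add hb k a (j / b) ha h3,
        digSum_rec hb j]
      omega

lemma runSum_zero (b : ℕ) : runSum b 0 = 0 := by simp [runSum]

lemma runSum_succ (b n : ℕ) : runSum b (n + 1) = runSum b n + digSum b n :=
  Finset.sum_range_succ _ _

lemma runSum_split {b : ℕ} (hb : 2 ≤ b) (k a : ℕ) (ha : a < b) :
    ∀ m, m ≤ b ^ k → runSum b (a * b ^ k + m) = runSum b (a * b ^ k) + a * m + runSum b m
  | 0, _ => by simp [runSum_zero]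
  | (m+1), hm => by
      have hm' : m ≤ b ^ k := by omega
      have he : a * b ^ k + (m + 1) = (a * b ^ k + m) + 1 := by ring
      rw [he, runSum_succ, runSum_split hb k a ha m hm',
        digSum_add hb k a m ha (by omega), runSum_succ]
      ring

lemma runSum_mul {b : ℕ} (hb : 2 ≤ b) (k : ℕ) :
    ∀ a, a ≤ b → 2 * runSum b (a * b ^ k) = 2 * a * runSum b (b ^ k) + b ^ k * (a * (a - 1))
  | 0, _ => by simp [runSum_zero]
  | (a+1), ha => by
      have ha' : a < b := by omega
      have h1 : (a+1) * b ^ k = a * b ^ k + b ^ k := by ring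
      rw [h1, runSum_split hb k a ha' (b ^ k) le_rfl]
      have ih := runSum_mul hb k a (by omega)
      have hs : (a + 1) * (a + 1 - 1) = a * (a - 1) + 2 * a := by
        cases a with
        | zero => simp
        | succ c => simp only [Nat.succ_sub_one]; ring
      rw [Nat.mul_add, Nat.mul_add, hs]
      calc 2 * runSum b (a * b ^ k) + 2 * (a * b ^ k) + 2 * runSum b (b ^ k)
          = (2 * a * runSum b (b ^ k) + b ^ k * (a * (a-1))) + 2 * (a * b ^ k)
            + 2 * runSum b (b ^ k) := by rw [ih]
        _ = 2 * (a+1) * runSum b (b ^ k) + (b ^ k * (a * (a - 1)) + b ^ k * (2 * a)) := by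
              ring
        _ = 2 * (a+1) * runSum b (b ^ k) + b ^ k * (a * (a - 1) + 2 * a) := by ring

lemma runSum_pow {b : ℕ} (hb : 2 ≤ b) : ∀ k, 2 * runSum b (b ^ k) = b ^ k * (k * (b - 1))
  | 0 => by simp [runSum, digSum]
  | (k+1) => by
      have h1 : b ^ (k+1) = b * b ^ k := by rw [pow_succ]; ring
      rw [h1, runSum_mul hb k b le_rfl]
      calc 2 * b * runSum b (b ^ k) + b ^ k * (b * (b - 1))
          = b * (2 * runSum b (b ^ k)) + b ^ k * (b * (b-1)) := by ring
        _ = b * (b ^ k * (k * (b - 1))) + b ^ k * (b * (b-1)) := by rw [runSum_pow hb k]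
        _ = b * b ^ k * ((k + 1) * (b - 1)) := by ring

lemma runSum_closed {b : ℕ} (hb : 2 ≤ b) (k a : ℕ) (ha : a ≤ b) :
    2 * runSum b (a * b ^ k) = a * b ^ k * (k * (b - 1) + (a - 1)) := by
  have h2 := runSum_pow hb k
  calc 2 * runSum b (a * b ^ k)
      = 2 * a * runSum b (b ^ k) + b ^ k * (a * (a - 1)) := runSum_mul hb k a ha
    _ = a * (2 * runSum b (b ^ k)) + b ^ k * (a * (a - 1)) := by ring
    _ = a * (b ^ k * (k * (b - 1))) + b ^ k * (a * (a - 1)) := by rw [h2]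
    _ = a * b ^ k * (k * (b - 1) + (a - 1)) := by ring

/-- Bernoulli-type inequality : for `1 ≤ x ≤ y`, `(x-1) log y ≤ (y-1) log x`. -/
lemma bern {x y : ℝ} (hx : 1 ≤ x) (hxy : x ≤ y) :
    (x - 1) * Real.log y ≤ (y - 1) * Real.log x := by
  rcases eq_or_lt_of_le hx with h | h
  · rw [← h]; simp
  · have hx1 : (0:ℝ) < x - 1 := by linarith
    have hp : 1 ≤ (y - 1) / (x - 1) := by
      rw [le_div_iff₀ hx1]; linarith
    have hber := one_add_mul_self_le_rpow_one_add (s := x - 1) (by linarith) hp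
    have hxe : (1:ℝ) + (x - 1) = x := by ring
    rw [hxe] at hber
    have hye : (1:ℝ) + (y - 1) / (x - 1) * (x - 1) = y := by field_simp; ring
    rw [hye] at hber
    have h3 : Real.log y ≤ Real.log (x ^ ((y - 1) / (x - 1))) :=
      Real.log_le_log (by linarith) hber
    rw [Real.log_rpow (by linarith)] at h3
    have h4 := mul_le_mul_of_nonneg_left h3 hx1.le
    calc (x - 1) * Real.log y ≤ (x - 1) * ((y - 1) / (x - 1) * Real.log x) := h4
      _ = (y - 1) * Real.log x := by field_simp

/-- Concavity of log along the segment `[a, a+1]`. -/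
lemma log_concave_seg {a t : ℝ} (ha : 1 ≤ a) (ht0 : 0 ≤ t) (ht1 : t ≤ 1) :
    (1 - t) * Real.log a + t * Real.log (a + 1) ≤ Real.log (a + t) := by
  have h := strictConcaveOn_log_Ioi.concaveOn.2 (Set.mem_Ioi.2 (by linarith : (0:ℝ) < a))
    (Set.mem_Ioi.2 (by linarith : (0:ℝ) < a + 1)) (by linarith : (0:ℝ) ≤ 1 - t) ht0
    (by ring)
  simp only [smul_eq_mul] at h
  have he : (1 - t) * a + t * (a + 1) = a + t := by ring
  rw [he] at h
  exact h

/-- The main real inequality (division-free form). -/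
lemma main_ineq {b a t : ℝ} (hb : 2 ≤ b) (ha : 1 ≤ a) (hab : a + 1 ≤ b)
    (ht0 : 0 < t) (ht1 : t ≤ 1) :
    (a * (a - 1) / 2 + a * t) * (2 * Real.log b) ≤
      (b - 1) * ((a + t) * Real.log (a + t) - t * Real.log t) := by
  have hLb : 0 < Real.log b := Real.log_pos (by linarith)
  set La := Real.log a with hLa
  set La1 := Real.log (a + 1) with hLa1
  have h1 : (1 - t) * La + t * La1 ≤ Real.log (a + t) := log_concave_seg ha ht0.le ht1
  have h2 : (a + t) * ((1 - t) * La + t * La1) ≤ (a + t) * Real.log (a + t) :=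
    mul_le_mul_of_nonneg_left h1 (by linarith)
  have h3 : La1 - La ≤ 1 := by
    have hpos : (0:ℝ) < (a + 1) / a := by positivity
    have h' := Real.log_le_sub_one_of_pos hpos
    rw [Real.log_div (by linarith) (by linarith)] at h'
    have h'' : (a + 1) / a - 1 ≤ 1 := by
      rw [div_sub_one (by linarith : a ≠ 0), div_le_one (by linarith)]; linarith
    linarith
  have h4 : Real.log t ≤ t - 1 := Real.log_le_sub_one_of_pos ht0
  have h5 : t * (1 - t) * (La1 - La) ≤ -(t * Real.log t) := by
    have e1 : t * (1 - t) * (La1 - La) ≤ t * (1 - t) * 1 :=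
      mul_le_mul_of_nonneg_left h3 (by nlinarith)
    have e2 : t * Real.log t ≤ t * (t - 1) := mul_le_mul_of_nonneg_left h4 ht0.le
    nlinarith
  have key : (1 - t) * (a * La) + t * ((a + 1) * La1) ≤
      (a + t) * Real.log (a + t) - t * Real.log t := by nlinarith [h2, h5]
  have bern1 : (a - 1) * Real.log b ≤ (b - 1) * La := bern ha (by linarith)
  have bern2 : a * Real.log b ≤ (b - 1) * La1 := by
    have hh := bern (x := a + 1) (y := b) (by linarith) hab
    calc a * Real.log b = (a + 1 - 1) * Real.log b := by ring
      _ ≤ (b - 1) * La1 := hh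
  have hb1 : (0:ℝ) ≤ b - 1 := by linarith
  nlinarith [mul_le_mul_of_nonneg_left bern1 (by nlinarith : (0:ℝ) ≤ (1 - t) * a),
    mul_le_mul_of_nonneg_left bern2 (by nlinarith : (0:ℝ) ≤ t * (a + 1)),
    mul_le_mul_of_nonneg_left key hb1]

/-- Main bound, for all `n`, by strong induction. -/
lemma runSum_le (b : ℕ) (hb : 2 ≤ b) (n : ℕ) :
    (runSum b n : ℝ) ≤ ((b : ℝ) - 1) * n * Real.log n / (2 * Real.log b) := by
  have hbR : (1:ℝ) < (b:ℝ) := by exact_mod_cast (by omega : 1 < b)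
  have hLb : 0 < Real.log b := Real.log_pos hbR
  induction n using Nat.strong_induction_on with
  | _ n ih =>
  rcases Nat.eq_zero_or_pos n with rfl | hn
  · norm_num [runSum_zero]
  set k := Nat.log b n with hk
  have hBn : b ^ k ≤ n := Nat.pow_log_le_self b (by omega)
  have hnlt : n < b ^ (k + 1) := Nat.lt_pow_succ_log_self (by omega) n
  have hB0 : 0 < b ^ k := Nat.pow_pos (by omega)
  set a := n / b ^ k with hadef
  set m := n % b ^ k with hmdef
  have ha1 : 1 ≤ a := (Nat.one_le_div_iff hB0).2 hBn
  have hab : a < b := by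
    rw [hadef, Nat.div_lt_iff_lt_mul hB0]
    calc n < b ^ (k + 1) := hnlt
      _ = b * b ^ k := by rw [pow_succ]; ring
  have hm : m < b ^ k := Nat.mod_lt n hB0
  have hnam : a * b ^ k + m = n := by
    rw [hadef, hmdef, Nat.mul_comm]
    exact Nat.div_add_mod n (b ^ k)
  have hclosed : 2 * runSum b (a * b ^ k) = a * b ^ k * (k * (b - 1) + (a - 1)) :=
    runSum_closed hb k a (by omega)
  -- real versions
  have hclosedR : 2 * (runSum b (a * b ^ k) : ℝ) =
      (a : ℝ) * (b : ℝ) ^ k * ((k : ℝ) * ((b : ℝ) - 1) + ((a : ℝ) - 1)) := by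
    have h2 : ((2 * runSum b (a * b ^ k) : ℕ) : ℝ)
        = ((a * b ^ k * (k * (b - 1) + (a - 1)) : ℕ) : ℝ) := by exact_mod_cast hclosed
    push_cast [Nat.cast_sub (show 1 ≤ b by omega), Nat.cast_sub ha1] at h2
    linear_combination h2
  have hBR : (0:ℝ) < (b : ℝ) ^ k := by positivity
  have haR : (1:ℝ) ≤ (a : ℝ) := by exact_mod_cast ha1
  have habR : (a : ℝ) + 1 ≤ (b : ℝ) := by exact_mod_cast hab
  have hnamR : (a : ℝ) * (b : ℝ) ^ k + (m : ℝ) = (n : ℝ) := by exact_mod_cast hnam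
  have h2Lb : (0:ℝ) < 2 * Real.log b := by linarith
  rw [le_div_iff₀ h2Lb]
  rcases Nat.eq_zero_or_pos m with hm0 | hm1
  · -- n = a * b^k exactly
    have hneq : a * b ^ k = n := by omega
    rw [hneq] at hclosedR
    have hnR : (n:ℝ) = (a:ℝ) * (b:ℝ)^k := by rw [← hneq]; push_cast; ring
    have hlogn : Real.log n = Real.log a + (k : ℝ) * Real.log b := by
      rw [hnR, Real.log_mul (by positivity) (by positivity), Real.log_pow]
    have bern1 : ((a:ℝ) - 1) * Real.log b ≤ ((b:ℝ) - 1) * Real.log a :=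
      bern haR (by linarith)
    have hcl2 := congrArg (fun x => x * Real.log b) hclosedR
    have bern1h := mul_le_mul_of_nonneg_left bern1
      (show (0:ℝ) ≤ (a:ℝ) * (b:ℝ)^k by positivity)
    rw [hlogn, hnR]
    nlinarith [hcl2, bern1h]
  · -- general case : use the key inequality with t = m / b^k
    have hmn : m < n := by omega
    have ihm := ih m hmn
    have ihm' : (runSum b m : ℝ) * (2 * Real.log b) ≤ ((b:ℝ) - 1) * m * Real.log m := by
      calc (runSum b m : ℝ) * (2 * Real.log b)
          ≤ (((b:ℝ) - 1) * m * Real.log m / (2 * Real.log b)) * (2 * Real.log b) :=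
            mul_le_mul_of_nonneg_right ihm h2Lb.le
        _ = ((b:ℝ) - 1) * m * Real.log m := by field_simp
    have hsplitN : runSum b n = runSum b (a * b ^ k) + a * m + runSum b m := by
      rw [← hnam]; exact runSum_split hb k a hab m hm.le
    have hmR : (1:ℝ) ≤ (m : ℝ) := by exact_mod_cast hm1
    have hmBR : (m : ℝ) ≤ (b:ℝ) ^ k := by exact_mod_cast hm.le
    have ht0 : (0:ℝ) < (m : ℝ) / (b:ℝ)^k := by positivity
    have ht1 : (m : ℝ) / (b:ℝ)^k ≤ 1 := by
      rw [div_le_one hBR]; exact hmBR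
    have main := main_ineq (b := (b:ℝ)) (a := (a:ℝ)) (t := (m:ℝ)/(b:ℝ)^k)
      (by exact_mod_cast hb) haR habR ht0 ht1
    have hn0R : ((n:ℝ)) ≠ 0 := by positivity
    have hm0R : ((m:ℝ)) ≠ 0 := by positivity
    have hB0R : ((b:ℝ)^k) ≠ 0 := ne_of_gt hBR
    have hlog1 : Real.log ((a:ℝ) + (m:ℝ)/(b:ℝ)^k)
        = Real.log n - (k:ℝ) * Real.log b := by
      have e : (a:ℝ) + (m:ℝ)/(b:ℝ)^k = (n:ℝ)/(b:ℝ)^k := by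
        field_simp
        linarith [hnamR]
      rw [e, Real.log_div hn0R hB0R, Real.log_pow]
    have hlog2 : Real.log ((m:ℝ)/(b:ℝ)^k) = Real.log m - (k:ℝ) * Real.log b := by
      rw [Real.log_div hm0R hB0R, Real.log_pow]
    rw [hlog1, hlog2] at main
    -- multiply `main` by b^k
    have main3 : ((a:ℝ) * ((a:ℝ) - 1) / 2 * (b:ℝ)^k + (a:ℝ) * (m:ℝ)) * (2 * Real.log b)
        ≤ ((b:ℝ) - 1) * ((n:ℝ) * (Real.log n - (k:ℝ) * Real.log b)
            - (m:ℝ) * (Real.log m - (k:ℝ) * Real.log b)) := by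
      have e1 : ((a:ℝ) * ((a:ℝ) - 1) / 2 * (b:ℝ)^k + (a:ℝ) * (m:ℝ)) * (2 * Real.log b)
          = (((a:ℝ) * ((a:ℝ) - 1) / 2 + (a:ℝ) * ((m:ℝ)/(b:ℝ)^k)) * (2 * Real.log b))
            * (b:ℝ)^k := by field_simp
      have e2 : ((b:ℝ) - 1) * ((n:ℝ) * (Real.log n - (k:ℝ) * Real.log b)
            - (m:ℝ) * (Real.log m - (k:ℝ) * Real.log b))
          = (((b:ℝ) - 1) * (((a:ℝ) + (m:ℝ)/(b:ℝ)^k) * (Real.log n - (k:ℝ) * Real.log b)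
            - ((m:ℝ)/(b:ℝ)^k) * (Real.log m - (k:ℝ) * Real.log b))) * (b:ℝ)^k := by
        rw [← hnamR]; field_simp
      rw [e1, e2]
      exact mul_le_mul_of_nonneg_right main hBR.le
    have hsplitR : (runSum b n : ℝ)
        = (runSum b (a * b ^ k) : ℝ) + (a:ℝ) * (m:ℝ) + (runSum b m : ℝ) := by
      exact_mod_cast hsplitN
    have hcl2 := congrArg (fun x => x * Real.log b) hclosedR
    have hnmk : ((b:ℝ) - 1) * ((n:ℝ) * ((k:ℝ) * Real.log b))
        - ((b:ℝ) - 1) * ((m:ℝ) * ((k:ℝ) * Real.log b))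
        = ((b:ℝ) - 1) * ((a:ℝ) * (b:ℝ)^k * ((k:ℝ) * Real.log b)) := by
      rw [← hnamR]; ring
    rw [hsplitR]
    linarith [main3, ihm', hcl2, hnmk]

/-- Drazin–Griffith: for `b ≥ 2`, `n ≥ 1`, `0 ≤ S_b(n) ≤ (b-1)·n·log n/(2 log b)`. -/
theorem running_digit_sum_bounds (b n : ℕ) (hb : 2 ≤ b) (hn : 1 ≤ n) :
    0 ≤ (runSum b n : ℝ) ∧
      (runSum b n : ℝ) ≤ ((b : ℝ) - 1) * n * Real.log n / (2 * Real.log b) := by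
  exact ⟨Nat.cast_nonneg _, runSum_le b hb n⟩
end

section
/- For all real numbers n ≥ 1 and x ≥ 1, the following identity holds: C̄(n,n) + C̄(n,x) − C̄(n, n/x) = (log n)·Σ_{1≤b≤x} ⌊n/b⌋ − ⌊x⌋·log(⌊n/x⌋!) − n·H(x) + ⌊x⌋ + Σ_{1≤b≤x} ∫₁^{n/b} {u}/u du, where H(x) = Σ_{1≤b≤x} 1/b and {u} denotes the fractional part of u. -/
open Real
open MeasureTheory intervalIntegral

/-- `C̄(n,x) = Σ_{1 ≤ b ≤ x} ⌊n/b⌋ log b` for real `n, x ≥ 1`. -/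
noncomputable def Cbar (n x : ℝ) : ℝ :=
  ∑ b ∈ Finset.Icc 1 ⌊x⌋₊, (⌊n / (b : ℝ)⌋₊ : ℝ) * Real.log b

/-- `H(x) = Σ_{1 ≤ b ≤ x} 1/b`. -/
noncomputable def Hsum (x : ℝ) : ℝ := ∑ b ∈ Finset.Icc 1 ⌊x⌋₊, (1 : ℝ) / b

lemma ae_ne_real (c : ℝ) : ∀ᵐ u : ℝ, u ≠ c := by
  rw [MeasureTheory.ae_iff]
  simpa [not_ne_iff] using Real.volume_singleton

lemma piece (k : ℕ) (hk : 1 ≤ k) (y : ℝ) (h1 : (k:ℝ) ≤ y) (h2 : y ≤ (k:ℝ)+1) :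
    IntervalIntegrable (fun u => Int.fract u / u) volume (k:ℝ) y ∧
    ∫ u in (k:ℝ)..y, Int.fract u / u = (y - k) - k * (Real.log y - Real.log k) := by
  have hk0 : (0:ℝ) < k := by exact_mod_cast hk
  set g : ℝ → ℝ := fun u => 1 - (k:ℝ) * (1/u) with hg
  have hgint : IntervalIntegrable g volume (k:ℝ) y := by
    apply ContinuousOn.intervalIntegrable
    apply ContinuousOn.sub continuousOn_const
    apply ContinuousOn.mul continuousOn_const
    apply ContinuousOn.div continuousOn_const continuousOn_id
    intro u hu
    rcases hu with ⟨hu1, -⟩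
    have : (0:ℝ) < u := lt_of_lt_of_le hk0 (by simpa [min_eq_left h1] using hu1)
    exact ne_of_gt this
  have hcong : ∀ᵐ u : ℝ, u ∈ Set.uIoc (k:ℝ) y → Int.fract u / u = g u := by
    filter_upwards [ae_ne_real ((k:ℝ)+1)] with u hu hmem
    rw [Set.uIoc_of_le h1] at hmem
    have hu1 : (k:ℝ) < u := hmem.1
    have hu2 : u < (k:ℝ)+1 := lt_of_le_of_ne (le_trans hmem.2 h2) hu
    have hfl : ⌊u⌋ = (k:ℤ) := by
      rw [Int.floor_eq_iff]
      constructor <;> push_cast <;> [exact le_of_lt hu1; exact hu2]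
    have : Int.fract u = u - k := by rw [Int.fract, hfl]; push_cast; ring
    rw [this, hg]
    have hu0 : u ≠ 0 := ne_of_gt (lt_trans hk0 hu1)
    field_simp
  have hres : ∀ᵐ u ∂(volume.restrict (Set.uIoc (k:ℝ) y)), g u = Int.fract u / u := by
    rw [MeasureTheory.ae_restrict_iff' measurableSet_uIoc]
    filter_upwards [hcong] with u h hm using (h hm).symm
  have hfint : IntervalIntegrable (fun u => Int.fract u / u) volume (k:ℝ) y :=
    hgint.congr_ae hres
  refine ⟨hfint, ?_⟩
  rw [intervalIntegral.integral_congr_ae hcong, hg]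
  have h0 : (0:ℝ) ∉ Set.uIcc (k:ℝ) y := by
    rw [Set.uIcc_of_le h1]
    rintro ⟨h, -⟩; linarith
  rw [intervalIntegral.integral_sub intervalIntegrable_const]
  · rw [intervalIntegral.integral_const_mul, integral_one_div h0,
      Real.log_div (by linarith) (ne_of_gt hk0)]
    simp
  · exact (intervalIntegrable_one_div (fun u hu => by
      rw [Set.uIcc_of_le h1] at hu; exact ne_of_gt (lt_of_lt_of_le hk0 hu.1))
      (by fun_prop)).const_mul _

lemma piece0 (y : ℝ) (h0 : 0 < y) (h1 : y ≤ 1) :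
    ∫ u in (1:ℝ)..y, Int.fract u / u = y - 1 := by
  have hcong : ∀ᵐ u : ℝ, u ∈ Set.uIoc (1:ℝ) y → Int.fract u / u = (1:ℝ) := by
    filter_upwards [ae_ne_real 1] with u hu hmem
    rw [Set.uIoc_of_ge h1] at hmem
    have hu1 : y < u := hmem.1
    have hu2 : u < 1 := lt_of_le_of_ne hmem.2 hu
    have : Int.fract u = u := Int.fract_eq_self.2 ⟨le_of_lt (lt_trans h0 hu1), hu2⟩
    rw [this, div_self (ne_of_gt (lt_trans h0 hu1))]
  rw [intervalIntegral.integral_congr_ae hcong]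
  simp

lemma cum (m : ℕ) (hm : 1 ≤ m) :
    IntervalIntegrable (fun u => Int.fract u / u) volume (1:ℝ) m ∧
    ∫ u in (1:ℝ)..(m:ℝ), Int.fract u / u
      = ((m:ℝ) - 1) - m * Real.log m + Real.log (Nat.factorial m) := by
  induction m with
  | zero => omega
  | succ m ih =>
    rcases Nat.eq_or_lt_of_le hm with h | h
    · simp [← h]
    · have hm1 : 1 ≤ m := by omega
      obtain ⟨ih1, ih2⟩ := ih hm1
      obtain ⟨p1, p2⟩ := piece m hm1 ((m:ℝ)+1) (by linarith) le_rfl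
      have hadd := intervalIntegral.integral_add_adjacent_intervals ih1 p1
      constructor
      · push_cast
        exact ih1.trans p1
      · push_cast
        rw [← hadd, ih2, p2, Nat.factorial_succ]
        push_cast
        rw [Real.log_mul (by positivity) (by positivity)]
        ring

lemma star (y : ℝ) (hy : 0 < y) :
    Real.log (Nat.factorial ⌊y⌋₊) =
      (⌊y⌋₊:ℝ) * Real.log y - y + 1 + ∫ u in (1:ℝ)..y, Int.fract u / u := by
  rcases Nat.eq_zero_or_pos ⌊y⌋₊ with h | h
  · have hy1 : y < 1 := Nat.floor_eq_zero.mp h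
    rw [h, piece0 y hy (le_of_lt hy1)]
    simp
  · set m := ⌊y⌋₊ with hm
    have h1 : (m:ℝ) ≤ y := Nat.floor_le (le_of_lt hy)
    have h2 : y ≤ (m:ℝ) + 1 := le_of_lt (by exact_mod_cast Nat.lt_floor_add_one y)
    obtain ⟨c1, c2⟩ := cum m h
    obtain ⟨p1, p2⟩ := piece m h y h1 h2
    rw [← intervalIntegral.integral_add_adjacent_intervals c1 p1, c2, p2]
    ring

lemma split_sum (f : ℕ → ℝ) (M N : ℕ) (h : M ≤ N) :
    ∑ b ∈ Finset.Icc 1 N, f b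
      = (∑ b ∈ Finset.Icc 1 M, f b) + ∑ b ∈ Finset.Icc (M+1) N, f b := by
  rw [← Finset.Ico_add_one_right_eq_Icc, ← Finset.Ico_add_one_right_eq_Icc 1 M, ← Finset.Ico_add_one_right_eq_Icc (M+1) N,
    Finset.sum_Ico_consecutive _ (by omega) (by omega)]

lemma log_fact (m : ℕ) :
    Real.log (Nat.factorial m) = ∑ b ∈ Finset.Icc 1 m, Real.log b := by
  induction m with
  | zero => simp
  | succ m ih =>
    rw [← Finset.Ico_add_one_right_eq_Icc, Finset.sum_Ico_succ_top (by omega), Finset.Ico_add_one_right_eq_Icc,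
      Nat.factorial_succ, Nat.cast_mul,
      Real.log_mul (by positivity) (by exact_mod_cast (Nat.factorial_pos m).ne'), ih]
    push_cast
    ring

lemma hyperbola (n x : ℝ) (hn : 1 ≤ n) (hx : 1 ≤ x) :
    Cbar n n - Cbar n (n/x)
      = (∑ a ∈ Finset.Icc 1 ⌊x⌋₊, Real.log (Nat.factorial ⌊n/(a:ℝ)⌋₊))
        - (⌊x⌋₊:ℝ) * Real.log (Nat.factorial ⌊n/x⌋₊) := by
  have hn0 : (0:ℝ) < n := by linarith
  have hx0 : (0:ℝ) < x := by linarith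
  have hMN : ⌊n/x⌋₊ ≤ ⌊n⌋₊ := Nat.floor_le_floor (div_le_self (le_of_lt hn0) hx)
  have hcond : ∀ a b : ℕ, 1 ≤ a → 1 ≤ b → (b ≤ ⌊n/(a:ℝ)⌋₊ ↔ a ≤ ⌊n/(b:ℝ)⌋₊) := by
    intro a b ha hb
    have ha0 : (0:ℝ) < a := by exact_mod_cast ha
    have hb0 : (0:ℝ) < b := by exact_mod_cast hb
    rw [Nat.le_floor_iff (by positivity), Nat.le_floor_iff (by positivity),
      le_div_iff₀ ha0, le_div_iff₀ hb0]
    constructor <;> intro h <;> nlinarith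
  have hflX : ∀ b : ℕ, ⌊n/x⌋₊ < b → ⌊n/(b:ℝ)⌋₊ ≤ ⌊x⌋₊ := by
    intro b hb
    have hb0 : (0:ℝ) < b := by
      have : 0 < b := by omega
      exact_mod_cast this
    have h1 : n/x < (b:ℝ) := lt_of_lt_of_le (Nat.lt_floor_add_one (n/x)) (by exact_mod_cast hb)
    have h1' : n < b * x := (div_lt_iff₀ hx0).mp h1
    have h2 : n/(b:ℝ) < x := by rw [div_lt_iff₀ hb0]; nlinarith
    exact Nat.floor_le_floor (le_of_lt h2)
  have hflN : ∀ a : ℕ, 1 ≤ a → ⌊n/(a:ℝ)⌋₊ ≤ ⌊n⌋₊ := by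
    intro a ha
    exact Nat.floor_le_floor (div_le_self (le_of_lt hn0) (by exact_mod_cast ha))
  have hMa : ∀ a ∈ Finset.Icc 1 ⌊x⌋₊, ⌊n/x⌋₊ ≤ ⌊n/(a:ℝ)⌋₊ := by
    intro a ha
    rw [Finset.mem_Icc] at ha
    have ha0 : (0:ℝ) < a := by exact_mod_cast ha.1
    have hax : (a:ℝ) ≤ x :=
      le_trans (by exact_mod_cast ha.2 : (a:ℝ) ≤ (⌊x⌋₊:ℝ)) (Nat.floor_le (le_of_lt hx0))
    refine Nat.floor_le_floor ?_
    rw [div_le_div_iff₀ hx0 ha0]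
    nlinarith
  have stepA : Cbar n n - Cbar n (n/x)
      = ∑ b ∈ Finset.Icc (⌊n/x⌋₊+1) ⌊n⌋₊, (⌊n/(b:ℝ)⌋₊:ℝ) * Real.log b := by
    simp only [Cbar]
    rw [split_sum (fun b => (⌊n/(b:ℝ)⌋₊:ℝ) * Real.log b) ⌊n/x⌋₊ ⌊n⌋₊ hMN]
    ring
  have stepB : ∀ a ∈ Finset.Icc 1 ⌊x⌋₊,
      Real.log (Nat.factorial ⌊n/(a:ℝ)⌋₊) - Real.log (Nat.factorial ⌊n/x⌋₊)
        = ∑ b ∈ Finset.Icc (⌊n/x⌋₊+1) ⌊n/(a:ℝ)⌋₊, Real.log b := by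
    intro a ha
    rw [log_fact, log_fact, split_sum _ ⌊n/x⌋₊ _ (hMa a ha)]
    ring
  have stepC : ∑ a ∈ Finset.Icc 1 ⌊x⌋₊,
        ∑ b ∈ Finset.Icc (⌊n/x⌋₊+1) ⌊n/(a:ℝ)⌋₊, Real.log b
      = ∑ b ∈ Finset.Icc (⌊n/x⌋₊+1) ⌊n⌋₊, (⌊n/(b:ℝ)⌋₊:ℝ) * Real.log b := by
    have e1 : ∀ a ∈ Finset.Icc 1 ⌊x⌋₊, Finset.Icc (⌊n/x⌋₊+1) ⌊n/(a:ℝ)⌋₊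
        = (Finset.Icc (⌊n/x⌋₊+1) ⌊n⌋₊).filter (fun b : ℕ => a ≤ ⌊n/(b:ℝ)⌋₊) := by
      intro a ha
      rw [Finset.mem_Icc] at ha
      ext b
      simp only [Finset.mem_Icc, Finset.mem_filter]
      constructor
      · rintro ⟨h1, h2⟩
        exact ⟨⟨h1, le_trans h2 (hflN a ha.1)⟩, (hcond a b ha.1 (by omega)).1 h2⟩
      · rintro ⟨⟨h1, h2⟩, h3⟩
        exact ⟨h1, (hcond a b ha.1 (by omega)).2 h3⟩
    calc ∑ a ∈ Finset.Icc 1 ⌊x⌋₊, ∑ b ∈ Finset.Icc (⌊n/x⌋₊+1) ⌊n/(a:ℝ)⌋₊, Real.log b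
        = ∑ a ∈ Finset.Icc 1 ⌊x⌋₊, ∑ b ∈ Finset.Icc (⌊n/x⌋₊+1) ⌊n⌋₊,
            if a ≤ ⌊n/(b:ℝ)⌋₊ then Real.log b else 0 := by
          refine Finset.sum_congr rfl fun a ha => ?_
          rw [e1 a ha, Finset.sum_filter]
      _ = ∑ b ∈ Finset.Icc (⌊n/x⌋₊+1) ⌊n⌋₊, ∑ a ∈ Finset.Icc 1 ⌊x⌋₊,
            if a ≤ ⌊n/(b:ℝ)⌋₊ then Real.log b else 0 := Finset.sum_comm
      _ = ∑ b ∈ Finset.Icc (⌊n/x⌋₊+1) ⌊n⌋₊, (⌊n/(b:ℝ)⌋₊:ℝ) * Real.log b := by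
          refine Finset.sum_congr rfl fun b hb => ?_
          rw [Finset.mem_Icc] at hb
          rw [← Finset.sum_filter]
          have hfil : (Finset.Icc 1 ⌊x⌋₊).filter (fun a : ℕ => a ≤ ⌊n/(b:ℝ)⌋₊)
              = Finset.Icc 1 ⌊n/(b:ℝ)⌋₊ := by
            have h := hflX b (by omega)
            ext a
            simp only [Finset.mem_filter, Finset.mem_Icc]
            omega
          rw [hfil, Finset.sum_const, Nat.card_Icc]
          simp [nsmul_eq_mul]
  rw [stepA, ← stepC, ← Finset.sum_congr rfl stepB, Finset.sum_sub_distrib,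
    Finset.sum_const, Nat.card_Icc]
  simp [nsmul_eq_mul]

/-- The key functional identity for `C̄`. -/
theorem Cbar_functional_equation (n x : ℝ) (hn : 1 ≤ n) (hx : 1 ≤ x) :
    Cbar n n + Cbar n x - Cbar n (n / x) =
      Real.log n * (∑ b ∈ Finset.Icc 1 ⌊x⌋₊, (⌊n / (b : ℝ)⌋₊ : ℝ))
        - (⌊x⌋₊ : ℝ) * Real.log (Nat.factorial ⌊n / x⌋₊)
        - n * Hsum x + (⌊x⌋₊ : ℝ)
        + ∑ b ∈ Finset.Icc 1 ⌊x⌋₊, ∫ u in (1:ℝ)..(n / (b : ℝ)), Int.fract u / u := by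
  have hn0 : (0:ℝ) < n := by linarith
  have key : ∀ b ∈ Finset.Icc 1 ⌊x⌋₊,
      (⌊n/(b:ℝ)⌋₊:ℝ) * Real.log b + Real.log (Nat.factorial ⌊n/(b:ℝ)⌋₊)
        = Real.log n * (⌊n/(b:ℝ)⌋₊:ℝ) - n * (1/(b:ℝ)) + 1
          + ∫ u in (1:ℝ)..(n/(b:ℝ)), Int.fract u / u := by
    intro b hb
    rw [Finset.mem_Icc] at hb
    have hb0 : (0:ℝ) < b := by exact_mod_cast hb.1
    rw [star (n/(b:ℝ)) (by positivity), Real.log_div (ne_of_gt hn0) (ne_of_gt hb0)]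
    field_simp
    ring
  have hsum := Finset.sum_congr rfl key
  rw [Finset.sum_add_distrib] at hsum
  have e1 : ∑ b ∈ Finset.Icc 1 ⌊x⌋₊,
      (Real.log n * (⌊n/(b:ℝ)⌋₊:ℝ) - n * (1/(b:ℝ)) + 1
        + ∫ u in (1:ℝ)..(n/(b:ℝ)), Int.fract u / u)
      = Real.log n * (∑ b ∈ Finset.Icc 1 ⌊x⌋₊, (⌊n/(b:ℝ)⌋₊:ℝ))
        - n * (∑ b ∈ Finset.Icc 1 ⌊x⌋₊, 1/(b:ℝ)) + (⌊x⌋₊:ℝ)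
        + ∑ b ∈ Finset.Icc 1 ⌊x⌋₊, ∫ u in (1:ℝ)..(n/(b:ℝ)), Int.fract u / u := by
    rw [Finset.sum_add_distrib, Finset.sum_add_distrib, Finset.sum_sub_distrib,
      ← Finset.mul_sum, ← Finset.mul_sum, Finset.sum_const, Nat.card_Icc]
    simp [nsmul_eq_mul]
  rw [e1] at hsum
  have hyp := hyperbola n x hn hx
  have hcx : Cbar n x = ∑ b ∈ Finset.Icc 1 ⌊x⌋₊, (⌊n/(b:ℝ)⌋₊:ℝ) * Real.log b := rfl
  have hhx : Hsum x = ∑ b ∈ Finset.Icc 1 ⌊x⌋₊, 1/(b:ℝ) := rfl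
  rw [hcx, hhx] at *
  linarith [hsum, hyp]
end

section
/- For real numbers n and x with 2 ≤ x ≤ n, one has ∫_x^n ⌊n/u⌋ log u du = (H_{⌊n/x⌋} − (x/n)⌊n/x⌋)·(n log n − n) − (J_{⌊n/x⌋} − (x/n)⌊n/x⌋·log(n/x))·n, where H_m = Σ_{j=1}^m 1/j and J_m = Σ_{j=1}^m (log j)/j. -/
open Real

/-- Harmonic number `H_m = Σ_{j=1}^m 1/j`. -/
noncomputable def Hnum (m : ℕ) : ℝ := ∑ j ∈ Finset.Icc 1 m, (1 : ℝ) / j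

/-- `J_m = Σ_{j=1}^m (log j)/j`. -/
noncomputable def Jnum (m : ℕ) : ℝ := ∑ j ∈ Finset.Icc 1 m, Real.log j / j

open MeasureTheory


lemma aux_floor_eq (n u : ℝ) (m : ℕ) (hu : 0 < u) (h1 : (m:ℝ) ≤ n / u)
    (h2 : n / u < m + 1) : ⌊n / u⌋₊ = m := by
  rw [Nat.floor_eq_iff (le_trans (Nat.cast_nonneg m) h1)]
  exact ⟨h1, by push_cast; exact h2⟩

lemma aux_integral (n : ℝ) (hn : 2 ≤ n) : ∀ m : ℕ, 1 ≤ m → ((m:ℝ) ≤ n →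
    IntervalIntegrable (fun u => (⌊n/u⌋₊ : ℝ) * Real.log u) volume (n/m) n ∧
    (∫ u in (n/(m:ℝ))..n, (⌊n/u⌋₊ : ℝ) * Real.log u)
      = (∑ j ∈ Finset.Icc 1 m, ((n/j) * Real.log (n/j) - n/j))
          - m * ((n/m) * Real.log (n/m) - n/m)) := by
  have hn0 : (0:ℝ) < n := by linarith
  intro m hm
  induction m, hm using Nat.le_induction with
  | base =>
    intro _
    constructor
    · simp
    · simp
  | succ m hm ih =>
    intro hmn
    have hm0 : (0:ℝ) < m := by exact_mod_cast hm
    have hmn' : (m:ℝ) ≤ n := by push_cast at hmn; linarith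
    obtain ⟨ihInt, ihEq⟩ := ih hmn'
    set a := n / ((m:ℝ)+1) with ha
    set b := n / (m:ℝ) with hb
    have ha0 : 0 < a := div_pos hn0 (by linarith)
    have hb0 : 0 < b := div_pos hn0 hm0
    have hab : a ≤ b := by
      apply div_le_div_of_nonneg_left (le_of_lt hn0) hm0; linarith
    have hbn : b ≤ n := by
      rw [hb]; exact div_le_self (le_of_lt hn0) (by exact_mod_cast hm)
    have hfloor : ∀ u ∈ Set.Ioc a b, ⌊n/u⌋₊ = m := by
      intro u hu
      have hu0 : 0 < u := lt_of_lt_of_le ha0 (le_of_lt hu.1)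
      apply aux_floor_eq n u m hu0
      · rw [le_div_iff₀ hu0]; calc (m:ℝ) * u ≤ m * b := by nlinarith [hu.2]
          _ = n := by rw [hb]; field_simp
      · rw [div_lt_iff₀ hu0]
        have : a * ((m:ℝ)+1) = n := by rw [ha]; field_simp
        nlinarith [hu.1]
    have hcont : ContinuousOn (fun u => (m:ℝ) * Real.log u) (Set.Icc a b) :=
      continuousOn_const.mul (Real.continuousOn_log.mono (fun y hy => by
        simp only [Set.mem_compl_iff, Set.mem_singleton_iff]
        exact ne_of_gt (lt_of_lt_of_le ha0 hy.1)))
    have hlogInt : IntegrableOn (fun u => (m:ℝ) * Real.log u) (Set.Ioc a b) volume :=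
      hcont.integrableOn_Icc.mono_set Set.Ioc_subset_Icc_self
    have hi1 : IntervalIntegrable (fun u => (⌊n/u⌋₊ : ℝ) * Real.log u) volume a b := by
      rw [intervalIntegrable_iff_integrableOn_Ioc_of_le hab]
      exact hlogInt.congr_fun (fun u hu => by rw [hfloor u hu]) measurableSet_Ioc
    have hcongr : (∫ u in a..b, (⌊n/u⌋₊ : ℝ) * Real.log u)
        = ∫ u in a..b, (m:ℝ) * Real.log u := by
      apply intervalIntegral.integral_congr_ae
      apply Filter.Eventually.of_forall
      intro u hu
      rw [Set.uIoc_of_le hab] at hu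
      rw [hfloor u hu]
    have hval : (∫ u in a..b, (m:ℝ) * Real.log u)
        = m * (b * Real.log b - a * Real.log a - b + a) := by
      rw [intervalIntegral.integral_const_mul, integral_log]
    have hsplit : (∫ u in a..n, (⌊n/u⌋₊ : ℝ) * Real.log u)
        = (∫ u in a..b, (⌊n/u⌋₊ : ℝ) * Real.log u)
          + ∫ u in b..n, (⌊n/u⌋₊ : ℝ) * Real.log u :=
      (intervalIntegral.integral_add_adjacent_intervals hi1 ihInt).symm
    have hcast : ((m+1:ℕ):ℝ) = (m:ℝ)+1 := by push_cast; ring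
    constructor
    · rw [hcast, ← ha]; exact hi1.trans ihInt
    · rw [hcast, ← ha, hsplit, hcongr, hval, ihEq,
        Finset.sum_Icc_succ_top (by omega : 1 ≤ m+1), hcast, ← ha]
      ring

/-- Closed form for `∫_x^n ⌊n/u⌋ log u du`. -/
theorem integral_floor_log (n x : ℝ) (hx : 2 ≤ x) (hxn : x ≤ n) :
    (∫ u in x..n, (⌊n / u⌋₊ : ℝ) * Real.log u) =
      (Hnum ⌊n / x⌋₊ - (x / n) * (⌊n / x⌋₊ : ℝ)) * (n * Real.log n - n)
        - (Jnum ⌊n / x⌋₊ - (x / n) * (⌊n / x⌋₊ : ℝ) * Real.log (n / x)) * n := by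
  have hn : 2 ≤ n := le_trans hx hxn
  have hn0 : (0:ℝ) < n := by linarith
  have hx0 : (0:ℝ) < x := by linarith
  set m := ⌊n/x⌋₊ with hmdef
  have h1nx : (1:ℝ) ≤ n / x := (one_le_div hx0).mpr hxn
  have hm1 : 1 ≤ m := Nat.le_floor (by exact_mod_cast h1nx)
  have hm0 : (0:ℝ) < m := by exact_mod_cast hm1
  have hmnx : (m:ℝ) ≤ n / x := Nat.floor_le (by positivity)
  have hnxm : n / x < m + 1 := by exact_mod_cast Nat.lt_floor_add_one (n/x)
  have hmxn : (m:ℝ) * x ≤ n := by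
    have := mul_le_mul_of_nonneg_right hmnx (le_of_lt hx0)
    rwa [div_mul_cancel₀ n (ne_of_gt hx0)] at this
  have hxb : x ≤ n / m := by rw [le_div_iff₀ hm0]; nlinarith
  have hmn : (m:ℝ) ≤ n := le_trans hmnx (by
    apply div_le_self (le_of_lt hn0); linarith)
  obtain ⟨hInt2, hEq2⟩ := aux_integral n hn m hm1 hmn
  set b := n / (m:ℝ) with hbdef
  have hb0 : 0 < b := div_pos hn0 hm0
  have hfloor : ∀ u ∈ Set.Icc x b, ⌊n/u⌋₊ = m := by
    intro u hu
    have hu0 : 0 < u := lt_of_lt_of_le hx0 hu.1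
    apply aux_floor_eq n u m hu0
    · rw [le_div_iff₀ hu0]
      calc (m:ℝ) * u ≤ m * b := by nlinarith [hu.2]
        _ = n := by rw [hbdef]; field_simp
    · calc n / u ≤ n / x := by
            apply div_le_div_of_nonneg_left (le_of_lt hn0) hx0 hu.1
        _ < m + 1 := hnxm
  have hcongr : (∫ u in x..b, (⌊n/u⌋₊:ℝ) * Real.log u)
      = ∫ u in x..b, (m:ℝ) * Real.log u :=
    intervalIntegral.integral_congr (fun u hu => by
      rw [Set.uIcc_of_le hxb] at hu; rw [hfloor u hu])
  have hval : (∫ u in x..b, (m:ℝ) * Real.log u)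
      = m * (b * Real.log b - x * Real.log x - b + x) := by
    rw [intervalIntegral.integral_const_mul, integral_log]
  have hcont : ContinuousOn (fun u => (m:ℝ) * Real.log u) (Set.Icc x b) :=
    continuousOn_const.mul (Real.continuousOn_log.mono (fun y hy => by
      simp only [Set.mem_compl_iff, Set.mem_singleton_iff]
      exact ne_of_gt (lt_of_lt_of_le hx0 hy.1)))
  have hi1 : IntervalIntegrable (fun u => (⌊n/u⌋₊ : ℝ) * Real.log u) volume x b := by
    rw [intervalIntegrable_iff_integrableOn_Ioc_of_le hxb]
    exact (hcont.integrableOn_Icc.mono_set Set.Ioc_subset_Icc_self).congr_fun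
      (fun u hu => by rw [hfloor u (Set.Ioc_subset_Icc_self hu)]) measurableSet_Ioc
  have hsplit : (∫ u in x..n, (⌊n/u⌋₊:ℝ) * Real.log u)
      = (∫ u in x..b, (⌊n/u⌋₊:ℝ) * Real.log u)
        + ∫ u in b..n, (⌊n/u⌋₊:ℝ) * Real.log u :=
    (intervalIntegral.integral_add_adjacent_intervals hi1 hInt2).symm
  have hsum : ∑ j ∈ Finset.Icc 1 m, ((n/j) * Real.log (n/j) - n/j)
      = (n * Real.log n - n) * Hnum m - n * Jnum m := by
    rw [Hnum, Jnum, Finset.mul_sum, Finset.mul_sum, ← Finset.sum_sub_distrib]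
    apply Finset.sum_congr rfl
    intro j hj
    have hj0 : (0:ℝ) < j := by exact_mod_cast (Finset.mem_Icc.mp hj).1
    rw [Real.log_div (ne_of_gt hn0) (ne_of_gt hj0)]
    field_simp
    ring
  rw [hsplit, hcongr, hval, hEq2, hsum, Real.log_div (ne_of_gt hn0) (ne_of_gt hx0)]
  rw [hbdef]
  field_simp
  ring
end

section
/- For real numbers t and u with 1 ≤ u ≤ t, one has Σ_{j=1}^{⌊t⌋} ⌊j/u⌋ = t·⌊t/u⌋ − (1/2)·u·⌊t/u⌋² − (1/2)·u·⌊t/u⌋ + O(t/u), where the implied constant is absolute. -/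
open Real

lemma gauss_real (K : ℕ) : ∑ k ∈ Finset.Icc 1 K, (k:ℝ) = K*(K+1)/2 := by
  induction K with
  | zero => simp
  | succ n ih =>
      rw [Finset.sum_Icc_succ_top (by omega)]
      rw [ih]; push_cast; ring

set_option maxHeartbeats 1000000 in
/-- `Σ_{j=1}^{⌊t⌋} ⌊j/u⌋ = t⌊t/u⌋ − ½u⌊t/u⌋² − ½u⌊t/u⌋ + O(t/u)` with an
absolute implied constant. -/
theorem sum_floor_dilated :
    ∃ C : ℝ, ∀ t u : ℝ, 1 ≤ u → u ≤ t →
      |(∑ j ∈ Finset.Icc 1 ⌊t⌋₊, (⌊(j : ℝ) / u⌋₊ : ℝ))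
          - (t * (⌊t / u⌋₊ : ℝ) - u * (⌊t / u⌋₊ : ℝ) ^ 2 / 2 - u * (⌊t / u⌋₊ : ℝ) / 2)|
        ≤ C * (t / u) := by
  use 4
  intro t u hu hut
  have hu0 : (0:ℝ) < u := lt_of_lt_of_le one_pos hu
  have ht1 : (1:ℝ) ≤ t := le_trans hu hut
  have ht0 : (0:ℝ) ≤ t := by linarith
  set N := ⌊t⌋₊ with hNdef
  set K := ⌊(N:ℝ)/u⌋₊ with hKdef
  set m := ⌊t/u⌋₊ with hmdef
  have hNt : (N:ℝ) ≤ t := Nat.floor_le ht0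
  have htN : t < (N:ℝ) + 1 := Nat.lt_floor_add_one t
  have hN0 : (0:ℝ) ≤ (N:ℝ) := Nat.cast_nonneg N
  have hKN : (K:ℝ) * u ≤ N := by
    have := Nat.floor_le (by positivity : (0:ℝ) ≤ (N:ℝ)/u)
    rw [← hKdef] at this
    calc (K:ℝ)*u ≤ ((N:ℝ)/u)*u := by nlinarith
      _ = N := by field_simp
  have hNK : (N:ℝ) < u * ((K:ℝ)+1) := by
    have := Nat.lt_floor_add_one ((N:ℝ)/u)
    rw [← hKdef] at this
    calc (N:ℝ) = ((N:ℝ)/u)*u := by field_simp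
      _ < ((K:ℝ)+1)*u := by nlinarith
      _ = u*((K:ℝ)+1) := by ring
  have hmt : u * (m:ℝ) ≤ t := by
    have := Nat.floor_le (by positivity : (0:ℝ) ≤ t/u)
    rw [← hmdef] at this
    calc u*(m:ℝ) ≤ u*(t/u) := by nlinarith
      _ = t := by field_simp
  have hKm : K ≤ m := Nat.floor_le_floor (by gcongr)
  have hmK : m ≤ K + 1 := by
    have h1 : t/u < (K:ℝ) + 2 := by
      rw [div_lt_iff₀ hu0]; nlinarith
    have := (Nat.floor_lt (by positivity : (0:ℝ) ≤ t/u)).mpr (by exact_mod_cast h1)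
    omega
  -- the swap
  have hswap : ∑ j ∈ Finset.Icc 1 N, (⌊(j : ℝ) / u⌋₊ : ℝ)
      = ∑ k ∈ Finset.Icc 1 K, ((N:ℝ) + 1 - (⌈(k:ℝ)*u⌉₊ : ℝ)) := by
    have h1 : ∀ j ∈ Finset.Icc 1 N, (⌊(j:ℝ)/u⌋₊ : ℝ)
        = ∑ k ∈ Finset.Icc 1 K, (if ⌈(k:ℝ)*u⌉₊ ≤ j then (1:ℝ) else 0) := by
      intro j hj
      rw [Finset.sum_boole]
      have hfil : (Finset.Icc 1 K).filter (fun k : ℕ => ⌈(k:ℝ)*u⌉₊ ≤ j)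
          = Finset.Icc 1 ⌊(j:ℝ)/u⌋₊ := by
        ext k
        simp only [Finset.mem_filter, Finset.mem_Icc, Finset.mem_Icc] at *
        constructor
        · rintro ⟨⟨hk1, hkK⟩, hc⟩
          refine ⟨hk1, ?_⟩
          have h2 : (k:ℝ)*u ≤ (j:ℝ) := le_trans (Nat.le_ceil _) (by exact_mod_cast hc)
          exact Nat.le_floor (by rw [le_div_iff₀ hu0]; exact h2)
        · rintro ⟨hk1, hkF⟩
          have hjN : (j:ℕ) ≤ N := hj.2
          have hkr : (k:ℝ) ≤ (j:ℝ)/u :=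
            (Nat.le_floor_iff (by positivity)).mp hkF
          have hkuj : (k:ℝ)*u ≤ (j:ℝ) := by
            rw [← le_div_iff₀ hu0]; exact hkr
          refine ⟨⟨hk1, ?_⟩, ?_⟩
          · apply Nat.le_floor
            rw [le_div_iff₀ hu0]
            calc (k:ℝ)*u ≤ (j:ℝ) := hkuj
              _ ≤ (N:ℝ) := by exact_mod_cast hjN
          · exact Nat.ceil_le.mpr (by exact_mod_cast hkuj)
      rw [hfil, Nat.card_Icc]
      simp
    rw [Finset.sum_congr rfl h1, Finset.sum_comm]
    apply Finset.sum_congr rfl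
    intro k hk
    rw [Finset.sum_boole]
    simp only [Finset.mem_Icc] at hk
    have hku1 : (1:ℝ) ≤ (k:ℝ)*u := by
      have : (1:ℝ) ≤ (k:ℝ) := by exact_mod_cast hk.1
      nlinarith
    have hkuN : (k:ℝ)*u ≤ (N:ℝ) := by
      have hkK : (k:ℝ) ≤ (K:ℝ) := by exact_mod_cast hk.2
      nlinarith
    have hc1 : 1 ≤ ⌈(k:ℝ)*u⌉₊ := by
      exact_mod_cast Nat.one_le_ceil_iff.mpr (by linarith)
    have hcN : ⌈(k:ℝ)*u⌉₊ ≤ N := Nat.ceil_le.mpr hkuN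
    have hfil2 : (Finset.Icc 1 N).filter (fun j : ℕ => ⌈(k:ℝ)*u⌉₊ ≤ j)
        = Finset.Icc ⌈(k:ℝ)*u⌉₊ N := by
      ext j
      simp only [Finset.mem_filter, Finset.mem_Icc]
      omega
    rw [hfil2, Nat.card_Icc]
    rw [Nat.cast_sub (by omega)]
    push_cast
    ring
  -- bounds on the k-sum
  have hGauss : ∑ k ∈ Finset.Icc 1 K, ((N:ℝ) + 1 - (k:ℝ)*u)
      = (K:ℝ)*((N:ℝ)+1) - u*((K:ℝ)*((K:ℝ)+1))/2 := by
    rw [Finset.sum_sub_distrib, Finset.sum_const, Nat.card_Icc]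
    have : ∑ k ∈ Finset.Icc 1 K, (k:ℝ)*u = (∑ k ∈ Finset.Icc 1 K, (k:ℝ))*u :=
      (Finset.sum_mul ..).symm
    rw [this, gauss_real]
    simp
    ring
  have hub : ∑ j ∈ Finset.Icc 1 N, (⌊(j : ℝ) / u⌋₊ : ℝ)
      ≤ (K:ℝ)*((N:ℝ)+1) - u*((K:ℝ)*((K:ℝ)+1))/2 := by
    rw [hswap, ← hGauss]
    apply Finset.sum_le_sum
    intro k hk
    have := Nat.le_ceil ((k:ℝ)*u)
    linarith
  have hlb : (K:ℝ)*((N:ℝ)+1) - u*((K:ℝ)*((K:ℝ)+1))/2 - K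
      ≤ ∑ j ∈ Finset.Icc 1 N, (⌊(j : ℝ) / u⌋₊ : ℝ) := by
    rw [hswap]
    have h2 : ∑ k ∈ Finset.Icc 1 K, ((N:ℝ) + 1 - ((k:ℝ)*u + 1))
        ≤ ∑ k ∈ Finset.Icc 1 K, ((N:ℝ) + 1 - (⌈(k:ℝ)*u⌉₊ : ℝ)) := by
      apply Finset.sum_le_sum
      intro k hk
      have := (Nat.ceil_lt_add_one (by positivity : (0:ℝ) ≤ (k:ℝ)*u)).le
      linarith
    have h3 : ∑ k ∈ Finset.Icc 1 K, ((N:ℝ) + 1 - ((k:ℝ)*u + 1))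
        = (K:ℝ)*((N:ℝ)+1) - u*((K:ℝ)*((K:ℝ)+1))/2 - K := by
      have : ∀ k ∈ Finset.Icc 1 K, ((N:ℝ) + 1 - ((k:ℝ)*u + 1))
          = ((N:ℝ) + 1 - (k:ℝ)*u) - 1 := by intro k _; ring
      rw [Finset.sum_congr rfl this, Finset.sum_sub_distrib, hGauss,
        Finset.sum_const, Nat.card_Icc]
      simp
    linarith
  have hKt : (K:ℝ) ≤ t/u := by
    rw [le_div_iff₀ hu0]; linarith
  have htu1 : (1:ℝ) ≤ t/u := by
    rw [le_div_iff₀ hu0]; nlinarith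
  have hK0 : (0:ℝ) ≤ (K:ℝ) := Nat.cast_nonneg K
  have hcase : m = K ∨ m = K + 1 := by omega
  set S := ∑ j ∈ Finset.Icc 1 N, (⌊(j : ℝ) / u⌋₊ : ℝ) with hSdef
  rw [abs_le]
  rcases hcase with h | h
  · rw [h]
    constructor <;>
      nlinarith [mul_nonneg hK0 (sub_nonneg.mpr hNt),
        mul_le_mul_of_nonneg_left (show t - (N:ℝ) ≤ 1 by linarith) hK0]
  · rw [h] at hmt ⊢
    push_cast at hmt ⊢
    constructor <;>
      nlinarith [mul_nonneg hK0 (sub_nonneg.mpr hNt),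
        mul_le_mul_of_nonneg_left (show t - (N:ℝ) ≤ 1 by linarith) hK0]
end

section
/- For real α with 0 < α ≤ 1, one has ∫₁^{1/α} (⌊v⌋ + {v}²)/v³ dv = 3/2 − (H_{⌊1/α⌋} − log(1/α)) − α·({1/α} + 1/2) − α²·((1/2){1/α}² − (1/2){1/α}), where H_m is the m-th harmonic number. -/
open Real MeasureTheory intervalIntegral

noncomputable def fI (v : ℝ) : ℝ := ((⌊v⌋₊ : ℝ) + Int.fract v ^ 2) / v ^ 3

noncomputable def GI (n : ℕ) (v : ℝ) : ℝ :=
  Real.log v + 2 * n / v - (n * (n + 1) / 2) / v ^ 2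

lemma hasDerivGI (n : ℕ) (v : ℝ) (hv : 0 < v) :
    HasDerivAt (GI n) (((n : ℝ) + (v - n) ^ 2) / v ^ 3) v := by
  have hl := Real.hasDerivAt_log hv.ne'
  have h2 : HasDerivAt (fun v : ℝ => 2 * (n : ℝ) / v)
      ((0 * v - 2 * n * 1) / v ^ 2) v :=
    (hasDerivAt_const v (2 * (n : ℝ))).div (hasDerivAt_id v) hv.ne'
  have h3 : HasDerivAt (fun v : ℝ => ((n : ℝ) * (n + 1) / 2) / v ^ 2)
      ((0 * v ^ 2 - (n * (n + 1) / 2) * (2 * v ^ 1)) / (v ^ 2) ^ 2) v :=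
    (hasDerivAt_const v ((n : ℝ) * (n + 1) / 2)).div (hasDerivAt_pow 2 v)
      (pow_ne_zero 2 hv.ne')
  have := (hl.add h2).sub h3
  refine HasDerivAt.congr_deriv (f := GI n) this ?_
  field_simp
  ring

lemma piece_s16 (n : ℕ) (a b : ℝ) (ha : 1 ≤ a) (hna : (n : ℝ) ≤ a) (hab : a ≤ b)
    (hb : b ≤ n + 1) :
    IntervalIntegrable fI volume a b ∧
      ∫ v in a..b, fI v = GI n b - GI n a := by
  set g : ℝ → ℝ := fun v => ((n : ℝ) + (v - n) ^ 2) / v ^ 3 with hg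
  have hpos : ∀ v ∈ Set.uIcc a b, 0 < v := by
    intro v hv
    rw [Set.uIcc_of_le hab] at hv
    linarith [hv.1]
  have hcont : ContinuousOn g (Set.uIcc a b) := by
    apply ContinuousOn.div
    · fun_prop
    · fun_prop
    · intro v hv
      exact pow_ne_zero 3 (hpos v hv).ne'
  have hgint : IntervalIntegrable g volume a b := hcont.intervalIntegrable
  -- a.e. equality
  have hae : ∀ᵐ v : ℝ, v ∈ Set.Ioc a b → fI v = g v := by
    have hne : ∀ᵐ v : ℝ, v ≠ (n + 1 : ℝ) := by
      rw [MeasureTheory.ae_iff]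
      have : {v : ℝ | ¬ v ≠ (n+1:ℝ)} = {((n:ℝ)+1)} := by ext v; simp
      rw [this]
      exact Real.volume_singleton
    filter_upwards [hne] with v hvne hvmem
    have h1 : (n : ℝ) < v := lt_of_le_of_lt hna hvmem.1
    have h2 : v < n + 1 := lt_of_le_of_ne (hvmem.2.trans hb) hvne
    have h0v : (0 : ℝ) ≤ v := by linarith [lt_of_lt_of_le zero_lt_one (ha.trans hvmem.1.le)]
    have hfl : ⌊v⌋ = (n : ℤ) := by
      rw [Int.floor_eq_iff]
      constructor <;> push_cast <;> linarith
    have hfr : Int.fract v = v - n := by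
      rw [Int.fract, hfl]; push_cast; ring
    have hnfl : ⌊v⌋₊ = n := by
      rw [Nat.floor_eq_iff h0v]
      constructor <;> push_cast <;> linarith
    simp only [fI, hg, hnfl, hfr]
  have haeR : fI =ᶠ[ae (volume.restrict (Set.Ioc a b))] g :=
    (ae_restrict_iff' measurableSet_Ioc).mpr hae
  have hfint : IntervalIntegrable fI volume a b := by
    rw [intervalIntegrable_iff_integrableOn_Ioc_of_le hab] at hgint ⊢
    exact hgint.congr haeR.symm
  refine ⟨hfint, ?_⟩
  have hcongr : ∫ v in a..b, fI v = ∫ v in a..b, g v := by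
    rw [intervalIntegral.integral_of_le hab, intervalIntegral.integral_of_le hab]
    exact MeasureTheory.setIntegral_congr_ae measurableSet_Ioc hae
  rw [hcongr]
  exact intervalIntegral.integral_eq_sub_of_hasDerivAt
    (fun v hv => hasDerivGI n v (hpos v hv)) hgint

lemma key (n : ℕ) (hn : 1 ≤ n) : ∀ x : ℝ, (n : ℝ) ≤ x → x ≤ n + 1 →
    IntervalIntegrable fI volume 1 x ∧
      ∫ v in (1:ℝ)..x, fI v =
        3 / 2 - Hnum n + Real.log x - (1 / x) * ((x - n) + 1 / 2)
          - (1 / x ^ 2) * ((x - n) ^ 2 / 2 - (x - n) / 2) := by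
  induction n, hn using Nat.le_induction with
  | base =>
    intro x hx1 hx2
    push_cast at hx1 hx2
    have hx0 : (0 : ℝ) < x := by linarith
    obtain ⟨hint, hval⟩ := piece_s16 1 1 x le_rfl (by norm_num) hx1 (by push_cast; linarith)
    refine ⟨hint, ?_⟩
    rw [hval]
    have hH : Hnum 1 = 1 := by simp [Hnum, Finset.sum_Icc_succ_top]
    rw [hH]
    simp only [GI, Nat.cast_one, Real.log_one]
    field_simp
    ring
  | succ n hn IH =>
    intro x hx1 hx2
    push_cast at hx1 hx2
    have hn1 : (0 : ℝ) < (n : ℝ) + 1 := by positivity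
    have hx0 : (0 : ℝ) < x := by linarith
    obtain ⟨I1, E1⟩ := IH ((n : ℝ) + 1) (by push_cast; linarith) le_rfl
    obtain ⟨I2, E2⟩ := piece_s16 (n + 1) ((n : ℝ) + 1) x (by push_cast; linarith)
      (by push_cast; exact le_rfl) hx1 (by push_cast; linarith)
    refine ⟨I1.trans I2, ?_⟩
    rw [← intervalIntegral.integral_add_adjacent_intervals I1 I2, E1, E2]
    have hH : Hnum (n + 1) = Hnum n + 1 / ((n : ℝ) + 1) := by
      rw [Hnum, Hnum, Finset.sum_Icc_succ_top (by omega : 1 ≤ n + 1)]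
      push_cast
      ring
    rw [hH]
    simp only [GI]
    push_cast
    field_simp
    ring

/-- Evaluation of `∫₁^{1/α} (⌊v⌋ + {v}²)/v³ dv`. -/
theorem integral_floor_fract_cube (α : ℝ) (h0 : 0 < α) (h1 : α ≤ 1) :
    (∫ v in (1:ℝ)..(1/α), ((⌊v⌋₊ : ℝ) + Int.fract v ^ 2) / v ^ 3) =
      3 / 2 - (Hnum ⌊1/α⌋₊ - Real.log (1/α))
        - α * (Int.fract (1/α) + 1 / 2)
        - α ^ 2 * (Int.fract (1/α) ^ 2 / 2 - Int.fract (1/α) / 2) := by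
  set x : ℝ := 1 / α with hxdef
  have hx1 : 1 ≤ x := by rw [hxdef]; exact one_le_one_div h0 h1
  have hx0 : 0 < x := by linarith
  set n : ℕ := ⌊x⌋₊ with hndef
  have hn1 : 1 ≤ n := Nat.floor_pos.mpr hx1
  have hfl : (n : ℝ) ≤ x := Nat.floor_le hx0.le
  have hlt : x ≤ n + 1 := (Nat.lt_floor_add_one x).le
  have hcast : ((⌊x⌋ : ℤ) : ℝ) = (n : ℝ) := by
    rw [hndef]
    rw [← Int.natCast_floor_eq_floor hx0.le]; push_cast; rfl
  have hfr : Int.fract x = x - n := by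
    rw [Int.fract, hcast]
  obtain ⟨-, hE⟩ := key n hn1 x hfl hlt
  have hEq : (∫ v in (1:ℝ)..x, ((⌊v⌋₊ : ℝ) + Int.fract v ^ 2) / v ^ 3)
      = ∫ v in (1:ℝ)..x, fI v := rfl
  rw [hEq, hE, hfr]
  have hα : α = 1 / x := by rw [hxdef, one_div_one_div]
  rw [hα]
  have hx0' : x ≠ 0 := hx0.ne'
  field_simp
  ring
end
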